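/- For every R > 0 there exists a constant C_R > 0 such that for every λ > 0 and every nonzero k ∈ ℝ³, ∫_{{u ∈ ℝ³ : |u| ≤ 2R}} (λ² + (u·k)²)^{-1} du ≤ C_R λ^{-4/3} |k|^{-2/3}. -/

import Mathlib

open Real MeasureTheory

noncomputable section

-- helper: volume of a preimage-box under an orthonormal basis repr
lemma box_volume (b : OrthonormalBasis (Fin 3) ℝ (EuclideanSpace ℝ (Fin 3)))
    (c : Fin 3 → ℝ) :
    volume (b.repr ⁻¹' (WithLp.ofLp ⁻¹' (Set.pi Set.univ fun i => Set.Icc (-(c i)) (c i))))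
      = ∏ i, ENNReal.ofReal (2 * c i) := by
  rw [b.measurePreserving_repr.measure_preimage
    ((MeasurableSet.univ_pi fun i => measurableSet_Icc).preimage
      (PiLp.volume_preserving_ofLp (Fin 3)).measurable).nullMeasurableSet]
  have : (WithLp.ofLp ⁻¹' (Set.pi Set.univ fun i => Set.Icc (-(c i)) (c i)))
      = (MeasurableEquiv.toLp 2 (Fin 3 → ℝ)).symm ⁻¹'
        (Set.pi Set.univ fun i => Set.Icc (-(c i)) (c i)) := rfl
  rw [this, (EuclideanSpace.volume_preserving_symm_measurableEquiv_toLp (Fin 3)).measure_preimage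
    (MeasurableSet.univ_pi fun i => measurableSet_Icc).nullMeasurableSet,
    volume_pi_pi]
  congr 1
  ext i
  rw [Real.volume_Icc]
  congr 1
  ring

theorem stmt14 (R : ℝ) (hR : 0 < R) :
    ∃ C : ℝ, 0 < C ∧ ∀ lam : ℝ, 0 < lam →
      ∀ k : EuclideanSpace ℝ (Fin 3), k ≠ 0 →
        (∫ u in {u : EuclideanSpace ℝ (Fin 3) | ‖u‖ ≤ 2 * R},
            (lam^2 + (inner ℝ u k : ℝ)^2)⁻¹)
          ≤ C * lam ^ (-(4:ℝ)/3) * ‖k‖ ^ (-(2:ℝ)/3) := by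
  refine ⟨32 * R ^ 2 + 64 * R ^ 3, by positivity, ?_⟩
  intro lam hlam k hk
  have hkn : (0:ℝ) < ‖k‖ := norm_pos_iff.2 hk
  -- target quantity
  set t : ℝ := lam ^ (-(4:ℝ)/3) * ‖k‖ ^ (-(2:ℝ)/3) with ht
  have htpos : 0 < t := by positivity
  set ρ : ℝ := lam ^ 2 * t with hρ
  have hρpos : 0 < ρ := by positivity
  -- key algebraic identity
  have key : (ρ * ‖k‖) ^ 2 * t = 1 := by
    have h1 : ρ * ‖k‖ = lam ^ ((2:ℝ)/3) * ‖k‖ ^ ((1:ℝ)/3) := by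
      rw [hρ, ht, ← Real.rpow_natCast lam 2]
      rw [show lam ^ ((2:ℕ):ℝ) * (lam ^ (-(4:ℝ)/3) * ‖k‖ ^ (-(2:ℝ)/3)) * ‖k‖
          = lam ^ ((2:ℕ):ℝ) * lam ^ (-(4:ℝ)/3) * (‖k‖ ^ (-(2:ℝ)/3) * ‖k‖) by ring,
        ← Real.rpow_add hlam, ← Real.rpow_add_one hkn.ne']
      norm_num
    rw [h1, mul_pow, ht, ← Real.rpow_natCast (lam ^ ((2:ℝ)/3)) 2,
      ← Real.rpow_natCast (‖k‖ ^ ((1:ℝ)/3)) 2, ← Real.rpow_mul hlam.le, ← Real.rpow_mul hkn.le,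
      show lam ^ ((2:ℝ)/3 * (2:ℕ)) * ‖k‖ ^ ((1:ℝ)/3 * (2:ℕ))
          * (lam ^ (-(4:ℝ)/3) * ‖k‖ ^ (-(2:ℝ)/3))
          = (lam ^ ((2:ℝ)/3 * (2:ℕ)) * lam ^ (-(4:ℝ)/3))
            * (‖k‖ ^ ((1:ℝ)/3 * (2:ℕ)) * ‖k‖ ^ (-(2:ℝ)/3)) by ring,
      ← Real.rpow_add hlam, ← Real.rpow_add hkn]
    norm_num
  -- orthonormal basis with b 0 = k/‖k‖
  have hone : Orthonormal ℝ (({0} : Set (Fin 3)).restrict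
      (fun _ : Fin 3 => (‖k‖⁻¹ • k : EuclideanSpace ℝ (Fin 3)))) := by
    constructor
    · intro i
      show ‖‖k‖⁻¹ • k‖ = 1
      rw [norm_smul, norm_inv, norm_norm, inv_mul_cancel₀ hkn.ne']
    · rintro ⟨i, hi⟩ ⟨j, hj⟩ hij
      rw [Set.mem_singleton_iff] at hi hj
      exact absurd (Subtype.ext (hi.trans hj.symm)) hij
  obtain ⟨b, hb0⟩ := hone.exists_orthonormalBasis_extension_of_card_eq
    (by simp [finrank_euclideanSpace_fin])
  have hb0 : b 0 = ‖k‖⁻¹ • k := hb0 0 rfl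
  -- inner product in coordinates
  have hip : ∀ u : EuclideanSpace ℝ (Fin 3),
      (inner ℝ u k : ℝ) = ‖k‖ * b.repr u 0 := by
    intro u
    rw [b.repr_apply_apply, hb0, real_inner_smul_left, real_inner_comm]
    field_simp
  -- coordinate bounds
  have hcoord : ∀ (u : EuclideanSpace ℝ (Fin 3)) (i : Fin 3),
      |b.repr u i| ≤ ‖u‖ := by
    intro u i
    rw [b.repr_apply_apply]
    calc |(inner ℝ (b i) u : ℝ)| ≤ ‖b i‖ * ‖u‖ := abs_real_inner_le_norm _ _
    _ = ‖u‖ := by rw [b.orthonormal.1 i, one_mul]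
  set f : EuclideanSpace ℝ (Fin 3) → ℝ :=
    fun u => (lam ^ 2 + (inner ℝ u k : ℝ) ^ 2)⁻¹ with hf
  have hinner : Continuous fun u : EuclideanSpace ℝ (Fin 3) => (inner ℝ u k : ℝ) :=
    continuous_id.inner continuous_const
  have hfc : Continuous f := by
    apply Continuous.inv₀
    · exact continuous_const.add (hinner.pow 2)
    · intro u; positivity
  set S : Set (EuclideanSpace ℝ (Fin 3)) := {u | ‖u‖ ≤ 2 * R} with hS
  have hSball : S = Metric.closedBall 0 (2 * R) := by
    ext u; simp [hS, Metric.mem_closedBall, dist_zero_right]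
  have hScompact : IsCompact S := hSball ▸ isCompact_closedBall _ _
  have hSmeas : MeasurableSet S := hScompact.measurableSet
  have hSfin : volume S < ⊤ := hScompact.measure_lt_top
  set A : Set (EuclideanSpace ℝ (Fin 3)) := S ∩ {u | |(inner ℝ u k : ℝ)| ≤ ρ * ‖k‖} with hA
  set B : Set (EuclideanSpace ℝ (Fin 3)) := S \ {u | |(inner ℝ u k : ℝ)| ≤ ρ * ‖k‖} with hB
  have hslabmeas : MeasurableSet {u : EuclideanSpace ℝ (Fin 3) | |(inner ℝ u k : ℝ)| ≤ ρ * ‖k‖} := by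
    exact hinner.abs.measurable measurableSet_Iic
  have hAmeas : MeasurableSet A := hSmeas.inter hslabmeas
  have hBmeas : MeasurableSet B := hSmeas.diff hslabmeas
  have hAfin : volume A < ⊤ := lt_of_le_of_lt (measure_mono Set.inter_subset_left) hSfin
  have hBfin : volume B < ⊤ := lt_of_le_of_lt (measure_mono Set.diff_subset) hSfin
  have hIntS : IntegrableOn f S := hfc.continuousOn.integrableOn_compact hScompact
  -- split
  have hsplit : (∫ u in S, f u) = (∫ u in A, f u) + (∫ u in B, f u) := by
    rw [← setIntegral_union (Set.disjoint_sdiff_right.mono_left Set.inter_subset_right) hBmeas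
      (hIntS.mono_set Set.inter_subset_left) (hIntS.mono_set Set.diff_subset),
      Set.inter_union_diff]
  -- volume bounds via boxes
  have hvolA : (volume A).toReal ≤ 2 * ρ * (4 * R) ^ 2 := by
    have hsub : A ⊆ b.repr ⁻¹' (WithLp.ofLp ⁻¹' (Set.pi Set.univ fun i =>
        Set.Icc (-(if i = 0 then ρ else 2 * R)) (if i = 0 then ρ else 2 * R))) := by
      rintro u ⟨huS, huslab⟩
      intro i _
      simp only [Set.mem_Icc, ← abs_le]
      by_cases hi : i = 0
      · subst hi
        simp only [if_pos rfl]
        have h1 := huslab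
        rw [Set.mem_setOf_eq, hip u, abs_mul, abs_of_nonneg hkn.le] at h1
        have h2 : ‖k‖ * |b.repr u 0| ≤ ‖k‖ * ρ := h1.trans_eq (mul_comm ρ ‖k‖)
        exact (mul_le_mul_iff_of_pos_left hkn).mp h2
      · simp only [if_neg hi]
        exact (hcoord u i).trans huS
    have := measure_mono (μ := (volume : Measure (EuclideanSpace ℝ (Fin 3)))) hsub
    rw [box_volume] at this
    have hfin : (∏ i : Fin 3, ENNReal.ofReal (2 * if i = 0 then ρ else 2 * R)) ≠ ⊤ :=
      (ENNReal.prod_lt_top fun i _ => ENNReal.ofReal_lt_top).ne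
    refine le_trans (ENNReal.toReal_mono hfin this) ?_
    rw [Fin.prod_univ_three]
    simp only [if_pos rfl, if_neg (show (1 : Fin 3) ≠ 0 by decide),
      if_neg (show (2 : Fin 3) ≠ 0 by decide)]
    rw [← ENNReal.ofReal_mul (by positivity), ← ENNReal.ofReal_mul (by positivity),
      ENNReal.toReal_ofReal (by positivity)]
    simp only [if_true]
    nlinarith [hρpos, hR]
  have hvolS : (volume S).toReal ≤ (4 * R) ^ 3 := by
    have hsub : S ⊆ b.repr ⁻¹' (WithLp.ofLp ⁻¹' (Set.pi Set.univ fun _ =>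
        Set.Icc (-(2 * R)) (2 * R))) := by
      intro u huS i _
      simp only [Set.mem_Icc, ← abs_le]
      exact (hcoord u i).trans huS
    have := measure_mono (μ := (volume : Measure (EuclideanSpace ℝ (Fin 3)))) hsub
    rw [box_volume] at this
    have hfin : (∏ _i : Fin 3, ENNReal.ofReal (2 * (2 * R))) ≠ ⊤ :=
      (ENNReal.prod_lt_top fun i _ => ENNReal.ofReal_lt_top).ne
    refine le_trans (ENNReal.toReal_mono hfin this) ?_
    rw [Fin.prod_univ_three, ← ENNReal.ofReal_mul (by positivity),
      ← ENNReal.ofReal_mul (by positivity), ENNReal.toReal_ofReal (by positivity)]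
    nlinarith [hR]
  -- bound on A
  have hboundA : (∫ u in A, f u) ≤ (lam ^ 2)⁻¹ * (2 * ρ * (4 * R) ^ 2) := by
    have h1 : ∀ u ∈ A, ‖f u‖ ≤ (lam ^ 2)⁻¹ := by
      intro u _
      rw [Real.norm_eq_abs, abs_of_nonneg (by positivity)]
      apply inv_anti₀ (by positivity)
      nlinarith [sq_nonneg (inner ℝ u k : ℝ)]
    calc (∫ u in A, f u) ≤ ‖∫ u in A, f u‖ := le_abs_self _
    _ ≤ (lam ^ 2)⁻¹ * (volume A).toReal := norm_setIntegral_le_of_norm_le_const hAfin h1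
    _ ≤ (lam ^ 2)⁻¹ * (2 * ρ * (4 * R) ^ 2) := by
        apply mul_le_mul_of_nonneg_left hvolA (by positivity)
  -- bound on B
  have hboundB : (∫ u in B, f u) ≤ ((ρ * ‖k‖) ^ 2)⁻¹ * (4 * R) ^ 3 := by
    have h1 : ∀ u ∈ B, ‖f u‖ ≤ ((ρ * ‖k‖) ^ 2)⁻¹ := by
      rintro u ⟨_, hu⟩
      rw [Set.mem_setOf_eq, not_le] at hu
      rw [Real.norm_eq_abs, abs_of_nonneg (by positivity)]
      apply inv_anti₀ (by positivity)
      have h2 : (ρ * ‖k‖) ^ 2 ≤ (inner ℝ u k : ℝ) ^ 2 := by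
        rw [← sq_abs (inner ℝ u k : ℝ)]
        exact pow_le_pow_left₀ (by positivity) hu.le 2
      nlinarith [hlam]
    calc (∫ u in B, f u) ≤ ‖∫ u in B, f u‖ := le_abs_self _
    _ ≤ ((ρ * ‖k‖) ^ 2)⁻¹ * (volume B).toReal :=
        norm_setIntegral_le_of_norm_le_const hBfin h1
    _ ≤ ((ρ * ‖k‖) ^ 2)⁻¹ * (4 * R) ^ 3 := by
        apply mul_le_mul_of_nonneg_left ?_ (by positivity)
        exact le_trans (ENNReal.toReal_mono hSfin.ne (measure_mono Set.diff_subset)) hvolS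
  -- combine
  have hinv : ((ρ * ‖k‖) ^ 2)⁻¹ = t := by
    field_simp
    nlinarith [key]
  have hρt : (lam ^ 2)⁻¹ * ρ = t := by
    rw [hρ]; field_simp
  calc (∫ u in S, f u) = (∫ u in A, f u) + (∫ u in B, f u) := hsplit
  _ ≤ (lam ^ 2)⁻¹ * (2 * ρ * (4 * R) ^ 2) + ((ρ * ‖k‖) ^ 2)⁻¹ * (4 * R) ^ 3 :=
      add_le_add hboundA hboundB
  _ = (32 * R ^ 2) * ((lam ^ 2)⁻¹ * ρ) + (64 * R ^ 3) * ((ρ * ‖k‖) ^ 2)⁻¹ := by ring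
  _ = (32 * R ^ 2 + 64 * R ^ 3) * t := by rw [hinv, hρt]; ring
  _ = (32 * R ^ 2 + 64 * R ^ 3) * lam ^ (-(4:ℝ)/3) * ‖k‖ ^ (-(2:ℝ)/3) := by rw [ht]; ring
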